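/- arXiv:1209.2544 — 2 statements merged into one kernel-verified Lean document; each statement's English description precedes it below -/
import Mathlib

section
/- Let p_X, p_Y be probability densities on ℝ^d with p_X, p_Y ∈ L^{a+b+1}(ℝ^d) for nonnegative reals a, b. Define p_{X,ε}(x) = ∫_{B_ε(x)} p_X and p_{Y,ε}(x) = ∫_{B_ε(x)} p_Y. Then vol(B_ε)^{-(a+b)} ∫ p_{X,ε}(x)^a p_{Y,ε}(x)^b p_X(x) dx → ∫ p_X(x)^{a+1} p_Y(x)^b dx as ε → 0. -/
open MeasureTheory Metric Filter Topology

namespace Stmt6Aux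

/-! ### Ball integrals as lower Lebesgue integrals -/

noncomputable def Bl (d : ℕ) (f : EuclideanSpace ℝ (Fin d) → ℝ) (ε : ℝ)
    (x : EuclideanSpace ℝ (Fin d)) : ENNReal :=
  ∫⁻ y in ball x ε, ENNReal.ofReal (f y)

noncomputable def Av (d : ℕ) (f : EuclideanSpace ℝ (Fin d) → ℝ) (ε : ℝ)
    (x : EuclideanSpace ℝ (Fin d)) : ℝ :=
  ⨍ y in ball x ε, f y

variable {d : ℕ} {f : EuclideanSpace ℝ (Fin d) → ℝ}

lemma measurable_prod_indicator (hf : Measurable f) (ε : ℝ) :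
    Measurable (fun p : EuclideanSpace ℝ (Fin d) × EuclideanSpace ℝ (Fin d) =>
      ({p : EuclideanSpace ℝ (Fin d) × EuclideanSpace ℝ (Fin d) | dist p.2 p.1 < ε}).indicator
        (fun q => ENNReal.ofReal (f q.2)) p) := by
  refine Measurable.indicator ?_ ?_
  · exact ENNReal.measurable_ofReal.comp (hf.comp measurable_snd)
  · exact (isOpen_lt (continuous_snd.dist continuous_fst) continuous_const).measurableSet

lemma Bl_eq_indicator (ε : ℝ) (x : EuclideanSpace ℝ (Fin d)) :
    Bl d f ε x = ∫⁻ y, ({p : EuclideanSpace ℝ (Fin d) × EuclideanSpace ℝ (Fin d) |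
      dist p.2 p.1 < ε}).indicator (fun q => ENNReal.ofReal (f q.2)) (x, y) := by
  rw [show Bl d f ε x = ∫⁻ y in ball x ε, ENNReal.ofReal (f y) from rfl,
    ← lintegral_indicator measurableSet_ball]
  refine lintegral_congr fun y => ?_
  by_cases h : y ∈ ball x ε
  · rw [Set.indicator_of_mem h, Set.indicator_of_mem (by simpa [mem_ball] using h)]
  · rw [Set.indicator_of_notMem h, Set.indicator_of_notMem (by simpa [mem_ball] using h)]

lemma measurable_Bl (hf : Measurable f) (ε : ℝ) :
    Measurable (fun x => Bl d f ε x) := by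
  have h := Measurable.lintegral_prod_right' (ν := volume) (measurable_prod_indicator hf ε)
  have e : (fun x => Bl d f ε x) = _ := funext (fun x => Bl_eq_indicator (f := f) ε x)
  rw [e]; exact h

lemma lintegral_Bl (hf : Measurable f) (ε : ℝ) :
    ∫⁻ x, Bl d f ε x = volume (ball (0 : EuclideanSpace ℝ (Fin d)) ε) *
      ∫⁻ y, ENNReal.ofReal (f y) := by
  calc ∫⁻ x, Bl d f ε x
      = ∫⁻ x, ∫⁻ y, ({p : EuclideanSpace ℝ (Fin d) × EuclideanSpace ℝ (Fin d) |
          dist p.2 p.1 < ε}).indicator (fun q => ENNReal.ofReal (f q.2)) (x, y) := by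
        exact lintegral_congr fun x => Bl_eq_indicator ε x
    _ = ∫⁻ y, ∫⁻ x, ({p : EuclideanSpace ℝ (Fin d) × EuclideanSpace ℝ (Fin d) |
          dist p.2 p.1 < ε}).indicator (fun q => ENNReal.ofReal (f q.2)) (x, y) := by
        exact lintegral_lintegral_swap (measurable_prod_indicator hf ε).aemeasurable
    _ = ∫⁻ y, ENNReal.ofReal (f y) * volume (ball (0 : EuclideanSpace ℝ (Fin d)) ε) := by
        refine lintegral_congr fun y => ?_
        have : ∀ x : EuclideanSpace ℝ (Fin d),
            ({p : EuclideanSpace ℝ (Fin d) × EuclideanSpace ℝ (Fin d) |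
              dist p.2 p.1 < ε}).indicator (fun q => ENNReal.ofReal (f q.2)) (x, y)
            = (ball y ε).indicator (fun _ => ENNReal.ofReal (f y)) x := by
          intro x
          by_cases h : dist y x < ε
          · rw [Set.indicator_of_mem (by exact h), Set.indicator_of_mem (by
              simpa [mem_ball, dist_comm] using h)]
          · rw [Set.indicator_of_notMem (by exact h), Set.indicator_of_notMem (by
              simpa [mem_ball, dist_comm] using h)]
        rw [lintegral_congr this, lintegral_indicator measurableSet_ball, setLIntegral_const,
          Measure.addHaar_ball_center]
    _ = volume (ball (0 : EuclideanSpace ℝ (Fin d)) ε) * ∫⁻ y, ENNReal.ofReal (f y) := by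
        rw [lintegral_mul_const' _ _ measure_ball_lt_top.ne, mul_comm]

lemma setIntegral_eq_toReal (hf : Measurable f) (hnn : ∀ x, 0 ≤ f x) (ε : ℝ)
    (x : EuclideanSpace ℝ (Fin d)) :
    ∫ y in ball x ε, f y = (Bl d f ε x).toReal := by
  rw [integral_eq_lintegral_of_nonneg_ae (ae_of_all _ fun y => hnn y)
    hf.aestronglyMeasurable.restrict]
  rfl

lemma Bl_ne_top (hint : Integrable f) (ε : ℝ) (x : EuclideanSpace ℝ (Fin d)) :
    Bl d f ε x ≠ ⊤ := by
  refine ne_of_lt (lt_of_le_of_lt ?_ hint.hasFiniteIntegral)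
  exact le_trans (lintegral_ofReal_le_lintegral_enorm _)
    (setLIntegral_le_lintegral _ _)

lemma Av_eq (hf : Measurable f) (hnn : ∀ x, 0 ≤ f x) (ε : ℝ)
    (x : EuclideanSpace ℝ (Fin d)) :
    Av d f ε x = (volume (ball (0 : EuclideanSpace ℝ (Fin d)) ε)).toReal⁻¹ *
      (Bl d f ε x).toReal := by
  rw [Av, setAverage_eq, Measure.addHaar_ball_center, setIntegral_eq_toReal hf hnn,
    smul_eq_mul]
  rw [measureReal_def, Measure.addHaar_ball_center]

lemma measurable_Av (hf : Measurable f) (hnn : ∀ x, 0 ≤ f x) (ε : ℝ) :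
    Measurable (fun x => Av d f ε x) := by
  have e : (fun x => Av d f ε x) = fun x =>
      (volume (ball (0 : EuclideanSpace ℝ (Fin d)) ε)).toReal⁻¹ * (Bl d f ε x).toReal :=
    funext (Av_eq hf hnn ε)
  rw [e]
  exact measurable_const.mul (measurable_Bl hf ε).ennreal_toReal

lemma Av_nonneg (hnn : ∀ x, 0 ≤ f x) (ε : ℝ) (x : EuclideanSpace ℝ (Fin d)) :
    0 ≤ Av d f ε x := by
  rw [Av, setAverage_eq, smul_eq_mul]
  exact mul_nonneg (by positivity) (setIntegral_nonneg measurableSet_ball fun y _ => hnn y)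

/-! ### Jensen's inequality and the `L^q` contraction property of averaging -/

lemma Av_rpow_le (hnn : ∀ x, 0 ≤ f x) {q : ℝ} (hq : 1 ≤ q)
    (hint : Integrable f) (hintq : Integrable (fun x => f x ^ q)) {ε : ℝ} (hε : 0 < ε)
    (x : EuclideanSpace ℝ (Fin d)) :
    Av d f ε x ^ q ≤ Av d (fun y => f y ^ q) ε x := by
  haveI h1 : IsFiniteMeasure (volume.restrict (ball x ε)) :=
    ⟨by rw [Measure.restrict_apply_univ]; exact measure_ball_lt_top⟩
  haveI h2 : NeZero (volume.restrict (ball x ε)) :=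
    ⟨fun h => (measure_ball_pos volume x hε).ne' (Measure.restrict_eq_zero.mp h)⟩
  exact ConvexOn.map_average_le (convexOn_rpow hq)
    (fun t _ => (Real.continuousAt_rpow_const t q
      (Or.inr (le_trans zero_le_one hq))).continuousWithinAt)
    isClosed_Ici (ae_of_all _ fun y => hnn y) hint.integrableOn hintq.integrableOn

lemma lintegral_Av_rpow_le (hf : Measurable f) (hnn : ∀ x, 0 ≤ f x) {q : ℝ} (hq : 1 ≤ q)
    (hint : Integrable f) (hintq : Integrable (fun x => f x ^ q)) {ε : ℝ} (hε : 0 < ε) :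
    ∫⁻ x, ENNReal.ofReal (Av d f ε x ^ q) ≤ ∫⁻ x, ENNReal.ofReal (f x ^ q) := by
  set v := volume (ball (0 : EuclideanSpace ℝ (Fin d)) ε) with hv
  have hv0 : v ≠ 0 := (measure_ball_pos volume _ hε).ne'
  have hvt : v ≠ ⊤ := measure_ball_lt_top.ne
  have hfq : Measurable (fun y => f y ^ q) := hf.pow measurable_const
  have hfqnn : ∀ y, 0 ≤ f y ^ q := fun y => Real.rpow_nonneg (hnn y) q
  calc ∫⁻ x, ENNReal.ofReal (Av d f ε x ^ q)
      ≤ ∫⁻ x, ENNReal.ofReal (Av d (fun y => f y ^ q) ε x) :=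
        lintegral_mono fun x => ENNReal.ofReal_le_ofReal
          (Av_rpow_le hnn hq hint hintq hε x)
    _ = ∫⁻ x, v⁻¹ * Bl d (fun y => f y ^ q) ε x := by
        refine lintegral_congr fun x => ?_
        rw [Av_eq hfq hfqnn, ENNReal.ofReal_mul (by positivity),
          ENNReal.ofReal_inv_of_pos (ENNReal.toReal_pos hv0 hvt),
          ENNReal.ofReal_toReal hvt, ENNReal.ofReal_toReal (Bl_ne_top hintq ε x)]
    _ = v⁻¹ * (v * ∫⁻ y, ENNReal.ofReal (f y ^ q)) := by
        rw [lintegral_const_mul' _ _ (ENNReal.inv_ne_top.mpr hv0), lintegral_Bl hfq ε]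
    _ = ∫⁻ y, ENNReal.ofReal (f y ^ q) := by
        rw [← mul_assoc, ENNReal.inv_mul_cancel hv0 hvt, one_mul]

/-! ### Lebesgue differentiation -/

lemma ae_tendsto_Av (hd : 1 ≤ d) (hint : Integrable f) :
    ∀ᵐ x, Tendsto (fun ε => Av d f ε x) (𝓝[>] (0:ℝ)) (𝓝 (f x)) := by
  haveI : Nonempty (Fin d) := ⟨⟨0, hd⟩⟩
  have hball : ∀ (x : EuclideanSpace ℝ (Fin d)) (ε : ℝ), 0 < ε →
      (closedBall x ε : Set (EuclideanSpace ℝ (Fin d))) =ᵐ[volume] ball x ε := by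
    intro x ε hε
    rw [MeasureTheory.ae_eq_set]
    constructor
    · refine measure_mono_null (fun y hy => ?_) (Measure.addHaar_sphere volume x ε)
      rcases hy with ⟨h1, h2⟩
      simp only [mem_closedBall] at h1
      simp only [mem_ball, not_lt] at h2
      exact le_antisymm h1 h2
    · rw [Set.diff_eq_empty.mpr ball_subset_closedBall]
      exact measure_empty
  filter_upwards [(Besicovitch.vitaliFamily
      (volume : Measure (EuclideanSpace ℝ (Fin d)))).ae_tendsto_average
      hint.locallyIntegrable] with x hx
  have h1 := hx.comp (Besicovitch.tendsto_filterAt volume x)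
  refine h1.congr' ?_
  filter_upwards [self_mem_nhdsWithin] with ε hε
  show ⨍ y in closedBall x ε, f y = Av d f ε x
  rw [Av, Measure.restrict_congr_set (hball x ε hε)]

/-! ### A generalized dominated convergence theorem -/

lemma glDCT {α : Type*} [MeasurableSpace α] {μ : Measure α}
    {h : ℕ → α → ENNReal} {H : α → ENNReal} {g : ℕ → α → ENNReal} {G : α → ENNReal}
    (hmeas : ∀ n, AEMeasurable (h n) μ) (Hmeas : AEMeasurable H μ)
    (gmeas : ∀ n, AEMeasurable (g n) μ) (Gmeas : AEMeasurable G μ)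
    (hle : ∀ n, h n ≤ᵐ[μ] g n) (hH : H ≤ᵐ[μ] G)
    (hlim : ∀ᵐ x ∂μ, Tendsto (fun n => h n x) atTop (𝓝 (H x)))
    (glim : ∀ᵐ x ∂μ, Tendsto (fun n => g n x) atTop (𝓝 (G x)))
    (gfin : ∫⁻ x, G x ∂μ ≠ ⊤)
    (gle : ∀ n, ∫⁻ x, g n x ∂μ ≤ ∫⁻ x, G x ∂μ) :
    Tendsto (fun n => ∫⁻ x, h n x ∂μ) atTop (𝓝 (∫⁻ x, H x ∂μ)) := by
  have Gfin : ∀ᵐ x ∂μ, G x < ⊤ := ae_lt_top' Gmeas gfin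
  have Hfin : ∀ᵐ x ∂μ, H x < ⊤ := by
    filter_upwards [hH, Gfin] with x h1 h2 using lt_of_le_of_lt h1 h2
  set Δ : ℕ → α → ENNReal := fun n x => (h n x - H x) + (H x - h n x) with hΔ
  have Δmeas : ∀ n, AEMeasurable (Δ n) μ := fun n =>
    ((hmeas n).sub Hmeas).add (Hmeas.sub (hmeas n))
  have Δle : ∀ n, Δ n ≤ᵐ[μ] fun x => g n x + G x := by
    intro n
    filter_upwards [hle n, hH] with x h1 h2
    exact add_le_add (le_trans tsub_le_self h1) (le_trans tsub_le_self h2)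
  have Δlim : ∀ᵐ x ∂μ, Tendsto (fun n => Δ n x) atTop (𝓝 0) := by
    filter_upwards [hlim, Hfin] with x hx hfx
    have t1 : Tendsto (fun n => h n x - H x) atTop (𝓝 0) := by
      have := ENNReal.Tendsto.sub hx tendsto_const_nhds (Or.inr hfx.ne)
      simpa using this
    have t2 : Tendsto (fun n => H x - h n x) atTop (𝓝 0) := by
      have := ENNReal.Tendsto.sub (tendsto_const_nhds (x := H x)) hx (Or.inl hfx.ne)
      simpa using this
    simpa using t1.add t2
  set c := ∫⁻ x, G x ∂μ with hc
  have εWle : ∀ n, ∫⁻ x, (g n x + G x) ∂μ = (∫⁻ x, g n x ∂μ) + c :=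
    fun n => lintegral_add_left' (gmeas n) _
  have Wle : ∀ n, ∫⁻ x, (g n x + G x) ∂μ ≤ c + c := by
    intro n; rw [εWle n]; exact add_le_add (gle n) le_rfl
  have ccfin : c + c ≠ ⊤ := by simp [ENNReal.add_ne_top, gfin]
  have Δint_le : ∀ n, ∫⁻ x, Δ n x ∂μ ≤ c + c :=
    fun n => le_trans (lintegral_mono_ae (Δle n)) (Wle n)
  have key : (c + c) ≤ liminf (fun n => (c + c) - ∫⁻ x, Δ n x ∂μ) atTop := by
    have fatou : ∫⁻ x, liminf (fun n => (g n x + G x) - Δ n x) atTop ∂μ ≤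
        liminf (fun n => ∫⁻ x, ((g n x + G x) - Δ n x) ∂μ) atTop :=
      lintegral_liminf_le' (fun n => ((gmeas n).add Gmeas).sub (Δmeas n))
    have e1 : ∫⁻ x, liminf (fun n => (g n x + G x) - Δ n x) atTop ∂μ = c + c := by
      have : ∀ᵐ x ∂μ, liminf (fun n => (g n x + G x) - Δ n x) atTop = G x + G x := by
        filter_upwards [glim, Δlim] with x hgx hΔx
        have : Tendsto (fun n => (g n x + G x) - Δ n x) atTop (𝓝 ((G x + G x) - 0)) :=
          ENNReal.Tendsto.sub (hgx.add tendsto_const_nhds) hΔx (Or.inr (by simp))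
        simpa using this.liminf_eq
      rw [lintegral_congr_ae this, lintegral_add_left' Gmeas]
    have e2 : ∀ n, ∫⁻ x, ((g n x + G x) - Δ n x) ∂μ ≤ (c + c) - ∫⁻ x, Δ n x ∂μ := by
      intro n
      rw [lintegral_sub' (Δmeas n) (ne_top_of_le_ne_top ccfin (Δint_le n)) (Δle n)]
      exact tsub_le_tsub_right (Wle n) _
    calc c + c = ∫⁻ x, liminf (fun n => (g n x + G x) - Δ n x) atTop ∂μ := e1.symm
      _ ≤ liminf (fun n => ∫⁻ x, ((g n x + G x) - Δ n x) ∂μ) atTop := fatou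
      _ ≤ liminf (fun n => (c + c) - ∫⁻ x, Δ n x ∂μ) atTop :=
          liminf_le_liminf (Eventually.of_forall e2)
  have Δtend : Tendsto (fun n => ∫⁻ x, Δ n x ∂μ) atTop (𝓝 0) := by
    rw [ENNReal.tendsto_nhds_zero]
    intro ε hε
    by_cases hεc : c + c ≤ ε
    · exact Eventually.of_forall fun n => le_trans (Δint_le n) hεc
    · push_neg at hεc
      have hb : (c + c) - ε < c + c := ENNReal.sub_lt_self ccfin
        (by intro h0; rw [h0] at hεc; exact (not_lt_of_ge (zero_le : 0 ≤ ε)) hεc) hε.ne'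
      filter_upwards [eventually_lt_of_lt_liminf (lt_of_lt_of_le hb key)] with n hn
      calc ∫⁻ x, Δ n x ∂μ
          = (c + c) - ((c + c) - ∫⁻ x, Δ n x ∂μ) :=
            (ENNReal.sub_sub_cancel ccfin (Δint_le n)).symm
        _ ≤ (c + c) - ((c + c) - ε) := tsub_le_tsub_left hn.le _
        _ = ε := ENNReal.sub_sub_cancel ccfin hεc.le
  have Hint_fin : ∫⁻ x, H x ∂μ ≠ ⊤ := ne_top_of_le_ne_top gfin (lintegral_mono_ae hH)
  have lower : ∀ n, (∫⁻ x, H x ∂μ) - ∫⁻ x, Δ n x ∂μ ≤ ∫⁻ x, h n x ∂μ := by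
    intro n
    rw [tsub_le_iff_right]
    calc ∫⁻ x, H x ∂μ ≤ ∫⁻ x, (h n x + Δ n x) ∂μ := by
          refine lintegral_mono fun x => ?_
          calc H x ≤ H x - h n x + h n x := le_tsub_add
            _ ≤ Δ n x + h n x := add_le_add le_add_self le_rfl
            _ = h n x + Δ n x := add_comm _ _
      _ = (∫⁻ x, h n x ∂μ) + ∫⁻ x, Δ n x ∂μ := lintegral_add_left' (hmeas n) _
  have upper : ∀ n, ∫⁻ x, h n x ∂μ ≤ (∫⁻ x, H x ∂μ) + ∫⁻ x, Δ n x ∂μ := by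
    intro n
    calc ∫⁻ x, h n x ∂μ ≤ ∫⁻ x, (H x + Δ n x) ∂μ := by
          refine lintegral_mono fun x => ?_
          calc h n x ≤ h n x - H x + H x := le_tsub_add
            _ ≤ Δ n x + H x := add_le_add le_self_add le_rfl
            _ = H x + Δ n x := add_comm _ _
      _ = (∫⁻ x, H x ∂μ) + ∫⁻ x, Δ n x ∂μ := lintegral_add_left' Hmeas _
  have lt : Tendsto (fun n => (∫⁻ x, H x ∂μ) - ∫⁻ x, Δ n x ∂μ) atTop (𝓝 (∫⁻ x, H x ∂μ)) := by
    have := ENNReal.Tendsto.sub (tendsto_const_nhds (x := ∫⁻ x, H x ∂μ)) Δtend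
      (Or.inl Hint_fin)
    simpa using this
  have ut : Tendsto (fun n => (∫⁻ x, H x ∂μ) + ∫⁻ x, Δ n x ∂μ) atTop (𝓝 (∫⁻ x, H x ∂μ)) := by
    have := (tendsto_const_nhds (x := ∫⁻ x, H x ∂μ)).add Δtend
    simpa using this
  exact tendsto_of_tendsto_of_tendsto_of_le_of_le' lt ut
    (Eventually.of_forall lower) (Eventually.of_forall upper)

/-! ### Normalization identity -/

lemma Phi_eq {pX pY : EuclideanSpace ℝ (Fin d) → ℝ} (hXm : Measurable pX)
    (hXnn : ∀ x, 0 ≤ pX x) (hYm : Measurable pY) (hYnn : ∀ x, 0 ≤ pY x)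
    (a b : ℝ) {ε : ℝ} (hε : 0 < ε) :
    ((volume (ball (0 : EuclideanSpace ℝ (Fin d)) ε)).toReal) ^ (-(a + b)) *
      ∫ x, (∫ y in ball x ε, pX y) ^ a * (∫ y in ball x ε, pY y) ^ b * pX x
    = ∫ x, (Av d pX ε x) ^ a * (Av d pY ε x) ^ b * pX x := by
  set v := (volume (ball (0 : EuclideanSpace ℝ (Fin d)) ε)).toReal with hv
  have hvpos : 0 < v :=
    ENNReal.toReal_pos (measure_ball_pos volume _ hε).ne' measure_ball_lt_top.ne
  rw [← integral_const_mul]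
  refine integral_congr_ae (ae_of_all _ fun x => ?_)
  dsimp only
  have hIX : (0:ℝ) ≤ ∫ y in ball x ε, pX y :=
    setIntegral_nonneg measurableSet_ball fun y _ => hXnn y
  have hIY : (0:ℝ) ≤ ∫ y in ball x ε, pY y :=
    setIntegral_nonneg measurableSet_ball fun y _ => hYnn y
  have hAX : Av d pX ε x = v⁻¹ * ∫ y in ball x ε, pX y := by
    rw [Av_eq hXm hXnn ε x, setIntegral_eq_toReal hXm hXnn ε x]
  have hAY : Av d pY ε x = v⁻¹ * ∫ y in ball x ε, pY y := by
    rw [Av_eq hYm hYnn ε x, setIntegral_eq_toReal hYm hYnn ε x]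
  rw [hAX, hAY, Real.mul_rpow (inv_nonneg.mpr hvpos.le) hIX,
    Real.mul_rpow (inv_nonneg.mpr hvpos.le) hIY]
  have hsplit : v ^ (-(a+b)) = v⁻¹ ^ a * v⁻¹ ^ b := by
    rw [← Real.rpow_add (inv_pos.mpr hvpos), Real.inv_rpow hvpos.le, ← Real.rpow_neg hvpos.le]
  rw [hsplit]; ring

end Stmt6Aux

/-- Lemma 1 of the paper, convergence of the normalized functional. -/
theorem stmt6 (d : ℕ) (hd : 1 ≤ d) (a b : ℝ) (ha : 0 ≤ a) (hb : 0 ≤ b)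
    (pX pY : EuclideanSpace ℝ (Fin d) → ℝ)
    (hXm : Measurable pX) (hYm : Measurable pY)
    (hXnn : ∀ x, 0 ≤ pX x) (hYnn : ∀ x, 0 ≤ pY x)
    (hXint : Integrable pX) (hYint : Integrable pY)
    (hX1 : ∫ x, pX x = 1) (hY1 : ∫ x, pY x = 1)
    (hXq : Integrable (fun x => pX x ^ (a + b + 1)))
    (hYq : Integrable (fun x => pY x ^ (a + b + 1))) :
    Tendsto (fun ε : ℝ =>
        ((volume (ball (0 : EuclideanSpace ℝ (Fin d)) ε)).toReal) ^ (-(a + b)) *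
          ∫ x, (∫ y in ball x ε, pX y) ^ a * (∫ y in ball x ε, pY y) ^ b * pX x)
      (𝓝[>] 0) (𝓝 (∫ x, pX x ^ (a + 1) * pY x ^ b)) := by
  set q : ℝ := a + b + 1 with hqdef
  have hq0 : (0:ℝ) < q := by rw [hqdef]; linarith
  have hq1 : 1 ≤ q := by rw [hqdef]; linarith
  rw [Filter.tendsto_iff_seq_tendsto]
  intro e he
  have hepos : ∀ᶠ n in atTop, 0 < e n := he.eventually eventually_mem_nhdsWithin
  set ε : ℕ → ℝ := fun n => if 0 < e n then e n else 1 with hεdef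
  have hεpos : ∀ n, 0 < ε n := by
    intro n; by_cases h : 0 < e n <;> simp [hεdef, h]
  have hee : ∀ᶠ n in atTop, e n = ε n := by
    filter_upwards [hepos] with n h; simp [hεdef, h]
  have hεt : Tendsto ε atTop (𝓝[>] (0:ℝ)) := he.congr' hee
  set AX : ℕ → EuclideanSpace ℝ (Fin d) → ℝ := fun n x => Stmt6Aux.Av d pX (ε n) x with hAXdef
  set AY : ℕ → EuclideanSpace ℝ (Fin d) → ℝ := fun n x => Stmt6Aux.Av d pY (ε n) x with hAYdef
  have mAX : ∀ n, Measurable (AX n) := fun n => Stmt6Aux.measurable_Av hXm hXnn (ε n)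
  have mAY : ∀ n, Measurable (AY n) := fun n => Stmt6Aux.measurable_Av hYm hYnn (ε n)
  have nnAX : ∀ n x, 0 ≤ AX n x := fun n x => Stmt6Aux.Av_nonneg hXnn (ε n) x
  have nnAY : ∀ n x, 0 ≤ AY n x := fun n x => Stmt6Aux.Av_nonneg hYnn (ε n) x
  set h : ℕ → EuclideanSpace ℝ (Fin d) → ENNReal :=
    fun n x => ENNReal.ofReal (AX n x ^ a * AY n x ^ b * pX x) with hhdef
  set H : EuclideanSpace ℝ (Fin d) → ENNReal :=
    fun x => ENNReal.ofReal (pX x ^ a * pY x ^ b * pX x) with hHdef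
  set g : ℕ → EuclideanSpace ℝ (Fin d) → ENNReal := fun n x =>
    ENNReal.ofReal (a/q * AX n x ^ q) + ENNReal.ofReal (b/q * AY n x ^ q)
      + ENNReal.ofReal (1/q * pX x ^ q) with hgdef
  set G : EuclideanSpace ℝ (Fin d) → ENNReal := fun x =>
    ENNReal.ofReal (a/q * pX x ^ q) + ENNReal.ofReal (b/q * pY x ^ q)
      + ENNReal.ofReal (1/q * pX x ^ q) with hGdef
  -- AM-GM
  have amgm : ∀ u v w : ℝ, 0 ≤ u → 0 ≤ v → 0 ≤ w →
      u ^ a * v ^ b * w ≤ a/q * u ^ q + b/q * v ^ q + 1/q * w ^ q := by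
    intro u v w hu hv hw
    have hw3 : a/q + b/q + 1/q = 1 := by field_simp [hqdef]; exact hqdef.symm
    have key := Real.geom_mean_le_arith_mean3_weighted
      (div_nonneg ha hq0.le) (div_nonneg hb hq0.le) (by positivity)
      (Real.rpow_nonneg hu q) (Real.rpow_nonneg hv q) (Real.rpow_nonneg hw q) hw3
    have e1 : q * (a / q) = a := by field_simp
    have e2 : q * (b / q) = b := by field_simp
    have e3 : q * (1 / q) = 1 := by field_simp
    rw [← Real.rpow_mul hu, ← Real.rpow_mul hv, ← Real.rpow_mul hw, e1, e2, e3,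
      Real.rpow_one] at key
    exact key
  have hle : ∀ n, h n ≤ᵐ[volume] g n := by
    intro n
    refine ae_of_all _ fun x => ?_
    calc h n x ≤ ENNReal.ofReal (a/q * AX n x ^ q + b/q * AY n x ^ q + 1/q * pX x ^ q) :=
        ENNReal.ofReal_le_ofReal (amgm _ _ _ (nnAX n x) (nnAY n x) (hXnn x))
      _ = g n x := by
        rw [hgdef]
        rw [ENNReal.ofReal_add (add_nonneg
              (mul_nonneg (div_nonneg ha hq0.le) (Real.rpow_nonneg (nnAX n x) q))
              (mul_nonneg (div_nonneg hb hq0.le) (Real.rpow_nonneg (nnAY n x) q)))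
            (mul_nonneg (by positivity) (Real.rpow_nonneg (hXnn x) q)),
          ENNReal.ofReal_add (mul_nonneg (div_nonneg ha hq0.le) (Real.rpow_nonneg (nnAX n x) q))
            (mul_nonneg (div_nonneg hb hq0.le) (Real.rpow_nonneg (nnAY n x) q))]
  have hHle : H ≤ᵐ[volume] G := by
    refine ae_of_all _ fun x => ?_
    calc H x ≤ ENNReal.ofReal (a/q * pX x ^ q + b/q * pY x ^ q + 1/q * pX x ^ q) :=
        ENNReal.ofReal_le_ofReal (amgm _ _ _ (hXnn x) (hYnn x) (hXnn x))
      _ = G x := by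
        rw [hGdef]
        rw [ENNReal.ofReal_add (add_nonneg
              (mul_nonneg (div_nonneg ha hq0.le) (Real.rpow_nonneg (hXnn x) q))
              (mul_nonneg (div_nonneg hb hq0.le) (Real.rpow_nonneg (hYnn x) q)))
            (mul_nonneg (by positivity) (Real.rpow_nonneg (hXnn x) q)),
          ENNReal.ofReal_add (mul_nonneg (div_nonneg ha hq0.le) (Real.rpow_nonneg (hXnn x) q))
            (mul_nonneg (div_nonneg hb hq0.le) (Real.rpow_nonneg (hYnn x) q))]
  -- measurability
  have mh : ∀ n, Measurable (h n) := fun n =>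
    ((((mAX n).pow measurable_const).mul ((mAY n).pow measurable_const)).mul
      hXm).ennreal_ofReal
  have mH : Measurable H :=
    (((hXm.pow measurable_const).mul (hYm.pow measurable_const)).mul hXm).ennreal_ofReal
  have mg : ∀ n, Measurable (g n) := fun n =>
    (((measurable_const.mul ((mAX n).pow measurable_const)).ennreal_ofReal).add
      ((measurable_const.mul ((mAY n).pow measurable_const)).ennreal_ofReal)).add
      ((measurable_const.mul (hXm.pow measurable_const)).ennreal_ofReal)
  have mG : Measurable G :=
    (((measurable_const.mul (hXm.pow measurable_const)).ennreal_ofReal).add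
      ((measurable_const.mul (hYm.pow measurable_const)).ennreal_ofReal)).add
      ((measurable_const.mul (hXm.pow measurable_const)).ennreal_ofReal)
  -- pointwise limits
  have hXae := Stmt6Aux.ae_tendsto_Av hd hXint
  have hYae := Stmt6Aux.ae_tendsto_Av hd hYint
  have hlim : ∀ᵐ x, Tendsto (fun n => h n x) atTop (𝓝 (H x)) := by
    filter_upwards [hXae, hYae] with x hx hy
    have tX : Tendsto (fun n => AX n x) atTop (𝓝 (pX x)) := hx.comp hεt
    have tY : Tendsto (fun n => AY n x) atTop (𝓝 (pY x)) := hy.comp hεt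
    have tXa : Tendsto (fun n => AX n x ^ a) atTop (𝓝 (pX x ^ a)) :=
      ((Real.continuousAt_rpow_const (pX x) a (Or.inr ha)).tendsto).comp tX
    have tYb : Tendsto (fun n => AY n x ^ b) atTop (𝓝 (pY x ^ b)) :=
      ((Real.continuousAt_rpow_const (pY x) b (Or.inr hb)).tendsto).comp tY
    exact (ENNReal.continuous_ofReal.tendsto _).comp ((tXa.mul tYb).mul tendsto_const_nhds)
  have glim : ∀ᵐ x, Tendsto (fun n => g n x) atTop (𝓝 (G x)) := by
    filter_upwards [hXae, hYae] with x hx hy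
    have tX : Tendsto (fun n => AX n x) atTop (𝓝 (pX x)) := hx.comp hεt
    have tY : Tendsto (fun n => AY n x) atTop (𝓝 (pY x)) := hy.comp hεt
    have tXq : Tendsto (fun n => AX n x ^ q) atTop (𝓝 (pX x ^ q)) :=
      ((Real.continuousAt_rpow_const (pX x) q (Or.inr hq0.le)).tendsto).comp tX
    have tYq : Tendsto (fun n => AY n x ^ q) atTop (𝓝 (pY x ^ q)) :=
      ((Real.continuousAt_rpow_const (pY x) q (Or.inr hq0.le)).tendsto).comp tY
    have t1 : Tendsto (fun n => ENNReal.ofReal (a/q * AX n x ^ q)) atTop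
        (𝓝 (ENNReal.ofReal (a/q * pX x ^ q))) :=
      (ENNReal.continuous_ofReal.tendsto _).comp (tendsto_const_nhds.mul tXq)
    have t2 : Tendsto (fun n => ENNReal.ofReal (b/q * AY n x ^ q)) atTop
        (𝓝 (ENNReal.ofReal (b/q * pY x ^ q))) :=
      (ENNReal.continuous_ofReal.tendsto _).comp (tendsto_const_nhds.mul tYq)
    exact (t1.add t2).add tendsto_const_nhds
  -- integrability bounds
  have ofReal_fin : ∀ {f : EuclideanSpace ℝ (Fin d) → ℝ}, Integrable f →
      ∫⁻ x, ENNReal.ofReal (f x) ≠ ⊤ := fun hf =>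
    ne_of_lt (lt_of_le_of_lt (lintegral_ofReal_le_lintegral_enorm _) hf.hasFiniteIntegral)
  have Gsplit : ∫⁻ x, G x = ((∫⁻ x, ENNReal.ofReal (a/q * pX x ^ q))
      + (∫⁻ x, ENNReal.ofReal (b/q * pY x ^ q))) + (∫⁻ x, ENNReal.ofReal (1/q * pX x ^ q)) := by
    rw [hGdef,
      lintegral_add_left' (f := fun x => ENNReal.ofReal (a/q * pX x ^ q) + ENNReal.ofReal (b/q * pY x ^ q))
        (((measurable_const.mul (hXm.pow measurable_const)).ennreal_ofReal).add
        ((measurable_const.mul (hYm.pow measurable_const)).ennreal_ofReal)).aemeasurable,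
      lintegral_add_left' (f := fun x => ENNReal.ofReal (a/q * pX x ^ q))
        ((measurable_const.mul (hXm.pow measurable_const)).ennreal_ofReal).aemeasurable]
  have gsplit : ∀ n, ∫⁻ x, g n x = ((∫⁻ x, ENNReal.ofReal (a/q * AX n x ^ q))
      + (∫⁻ x, ENNReal.ofReal (b/q * AY n x ^ q))) + (∫⁻ x, ENNReal.ofReal (1/q * pX x ^ q)) := by
    intro n
    rw [hgdef,
      lintegral_add_left' (f := fun x => ENNReal.ofReal (a/q * AX n x ^ q) + ENNReal.ofReal (b/q * AY n x ^ q))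
        (((measurable_const.mul ((mAX n).pow measurable_const)).ennreal_ofReal).add
        ((measurable_const.mul ((mAY n).pow measurable_const)).ennreal_ofReal)).aemeasurable,
      lintegral_add_left' (f := fun x => ENNReal.ofReal (a/q * AX n x ^ q))
        ((measurable_const.mul ((mAX n).pow measurable_const)).ennreal_ofReal).aemeasurable]
  have gfin : ∫⁻ x, G x ≠ ⊤ := by
    rw [Gsplit]
    refine ENNReal.add_ne_top.mpr ⟨ENNReal.add_ne_top.mpr ⟨?_, ?_⟩, ?_⟩
    · exact ofReal_fin (hXq.const_mul _)
    · exact ofReal_fin (hYq.const_mul _)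
    · exact ofReal_fin (hXq.const_mul _)
  -- contraction
  have contrX : ∀ n, ∫⁻ x, ENNReal.ofReal (AX n x ^ q) ≤ ∫⁻ x, ENNReal.ofReal (pX x ^ q) :=
    fun n => Stmt6Aux.lintegral_Av_rpow_le hXm hXnn hq1 hXint hXq (hεpos n)
  have contrY : ∀ n, ∫⁻ x, ENNReal.ofReal (AY n x ^ q) ≤ ∫⁻ x, ENNReal.ofReal (pY x ^ q) :=
    fun n => Stmt6Aux.lintegral_Av_rpow_le hYm hYnn hq1 hYint hYq (hεpos n)
  have pull : ∀ (w : ℝ), 0 ≤ w → ∀ (u : EuclideanSpace ℝ (Fin d) → ℝ),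
      ∫⁻ x, ENNReal.ofReal (w * u x) = ENNReal.ofReal w * ∫⁻ x, ENNReal.ofReal (u x) := by
    intro w hw u
    rw [← lintegral_const_mul' _ _ ENNReal.ofReal_ne_top]
    exact lintegral_congr fun x => ENNReal.ofReal_mul hw
  have gle : ∀ n, ∫⁻ x, g n x ≤ ∫⁻ x, G x := by
    intro n
    rw [Gsplit, gsplit n]
    refine add_le_add (add_le_add ?_ ?_) le_rfl
    · rw [pull _ (div_nonneg ha hq0.le), pull _ (div_nonneg ha hq0.le)]
      exact mul_le_mul_right (contrX n) _
    · rw [pull _ (div_nonneg hb hq0.le), pull _ (div_nonneg hb hq0.le)]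
      exact mul_le_mul_right (contrY n) _
  -- generalized dominated convergence
  have dct := Stmt6Aux.glDCT (fun n => (mh n).aemeasurable) mH.aemeasurable
    (fun n => (mg n).aemeasurable) mG.aemeasurable hle hHle hlim glim gfin gle
  have Hfin : ∫⁻ x, H x ≠ ⊤ := ne_top_of_le_ne_top gfin (lintegral_mono_ae hHle)
  have toReal_t : Tendsto (fun n => (∫⁻ x, h n x).toReal) atTop (𝓝 (∫⁻ x, H x).toReal) :=
    (ENNReal.tendsto_toReal Hfin).comp dct
  -- identify the limit
  have Hval : (∫⁻ x, H x).toReal = ∫ x, pX x ^ (a + 1) * pY x ^ b := by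
    have e : ∫ x, pX x ^ (a + 1) * pY x ^ b = ∫ x, pX x ^ a * pY x ^ b * pX x := by
      refine integral_congr_ae (ae_of_all _ fun x => ?_)
      dsimp only
      by_cases h0 : pX x = 0
      · rw [h0, Real.zero_rpow (by positivity : a + (1:ℝ) ≠ 0)]
        ring
      · rw [Real.rpow_add_one h0]; ring
    rw [e, integral_eq_lintegral_of_nonneg_ae (ae_of_all _ fun x =>
        mul_nonneg (mul_nonneg (Real.rpow_nonneg (hXnn x) a) (Real.rpow_nonneg (hYnn x) b))
          (hXnn x))
      ((((hXm.pow measurable_const).mul (hYm.pow measurable_const)).mul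
        hXm).aestronglyMeasurable)]
  -- identify the terms
  have hval : ∀ n, (∫⁻ x, h n x).toReal =
      ((volume (ball (0 : EuclideanSpace ℝ (Fin d)) (ε n))).toReal) ^ (-(a + b)) *
        ∫ x, (∫ y in ball x (ε n), pX y) ^ a * (∫ y in ball x (ε n), pY y) ^ b * pX x := by
    intro n
    rw [Stmt6Aux.Phi_eq hXm hXnn hYm hYnn a b (hεpos n)]
    rw [integral_eq_lintegral_of_nonneg_ae (ae_of_all _ fun x =>
        mul_nonneg (mul_nonneg (Real.rpow_nonneg (nnAX n x) a) (Real.rpow_nonneg (nnAY n x) b))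
          (hXnn x))
      (((((mAX n).pow measurable_const).mul ((mAY n).pow measurable_const)).mul
        hXm).aestronglyMeasurable)]
  rw [Hval] at toReal_t
  refine toReal_t.congr' ?_
  filter_upwards [hee] with n hn
  rw [Function.comp_apply, hn, hval n]
end

section
/- Bias bound for the quadratic functional q_{1,1}: if p_X, p_Y ∈ H_2^{(α)}(K), i.e., ‖p(·+h) − p(·)‖_{L^2} ≤ K|h|^α for all |h| ≤ 1, then |E[p_X(Y − εV)] − ∫ p_X p_Y| ≤ (1/2) K² ε^{2α} for 0 < ε ≤ 1, where V is uniform on the unit ball of ℝ^d and Y has density p_Y. -/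
open MeasureTheory Metric Filter

section Aux

variable {X : Type*} [MeasurableSpace X] {μ : Measure X}

lemma aux_integrable_L2_mul {f g : X → ℝ} (hf : MemLp f 2 μ) (hg : MemLp g 2 μ) :
    Integrable (fun x => f x * g x) μ := by
  have h : MemLp (g • f) 1 μ := hf.smul hg
  have he : (g • f) = fun x => f x * g x := by
    funext x; simp [mul_comm]
  rw [he] at h
  exact memLp_one_iff_integrable.mp h

lemma aux_cs {f g : X → ℝ} (hf : MemLp f 2 μ) (hg : MemLp g 2 μ) :
    |∫ x, f x * g x ∂μ| ≤ (eLpNorm f 2 μ).toReal * (eLpNorm g 2 μ).toReal := by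
  have h2 : (2:ℝ).HolderConjugate 2 := Real.holderConjugate_iff.mpr ⟨one_lt_two, by norm_num⟩
  have hof : (ENNReal.ofReal 2) = 2 := by simp
  have hf2 : MemLp f (ENNReal.ofReal 2) μ := hof ▸ hf
  have hg2 : MemLp g (ENNReal.ofReal 2) μ := hof ▸ hg
  have key := integral_mul_norm_le_Lp_mul_Lq h2 hf2 hg2
  have h1 : |∫ x, f x * g x ∂μ| ≤ ∫ x, ‖f x‖ * ‖g x‖ ∂μ := by
    have h := norm_integral_le_integral_norm (μ := μ) (fun x => f x * g x)
    simpa [Real.norm_eq_abs, abs_mul] using h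
  have ef : (eLpNorm f 2 μ).toReal = (∫ x, ‖f x‖ ^ (2:ℝ) ∂μ) ^ (1/(2:ℝ)) := by
    rw [hf.eLpNorm_eq_integral_rpow_norm two_ne_zero ENNReal.ofNat_ne_top,
      ENNReal.toReal_ofReal (Real.rpow_nonneg
        (integral_nonneg fun x => Real.rpow_nonneg (norm_nonneg _) _) _)]
    norm_num
  have eg : (eLpNorm g 2 μ).toReal = (∫ x, ‖g x‖ ^ (2:ℝ) ∂μ) ^ (1/(2:ℝ)) := by
    rw [hg.eLpNorm_eq_integral_rpow_norm two_ne_zero ENNReal.ofNat_ne_top,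
      ENNReal.toReal_ofReal (Real.rpow_nonneg
        (integral_nonneg fun x => Real.rpow_nonneg (norm_nonneg _) _) _)]
    norm_num
  rw [ef, eg]
  exact h1.trans key

end Aux

/-- bias bound for the quadratic functional `q_{1,1}` under
`L²`-Hölder smoothness of the densities. -/
theorem stmt9 (d : ℕ) (hd : 1 ≤ d) (K α : ℝ) (hK : 0 < K) (hα0 : 0 < α) (hα1 : α ≤ 1)
    (pX pY : EuclideanSpace ℝ (Fin d) → ℝ)
    (hXm : Measurable pX) (hYm : Measurable pY)
    (hXnn : ∀ x, 0 ≤ pX x) (hYnn : ∀ x, 0 ≤ pY x)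
    (hXint : Integrable pX) (hYint : Integrable pY)
    (hX1 : ∫ x, pX x = 1) (hY1 : ∫ x, pY x = 1)
    (hXL2 : MemLp pX 2 volume) (hYL2 : MemLp pY 2 volume)
    (hXHol : ∀ h : EuclideanSpace ℝ (Fin d), ‖h‖ ≤ 1 →
      eLpNorm (fun x => pX (x + h) - pX x) 2 volume ≤ ENNReal.ofReal (K * ‖h‖ ^ α))
    (hYHol : ∀ h : EuclideanSpace ℝ (Fin d), ‖h‖ ≤ 1 →
      eLpNorm (fun x => pY (x + h) - pY x) 2 volume ≤ ENNReal.ofReal (K * ‖h‖ ^ α))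
    (ε : ℝ) (hε0 : 0 < ε) (hε1 : ε ≤ 1) :
    |((volume (ball (0 : EuclideanSpace ℝ (Fin d)) ε)).toReal)⁻¹ *
        (∫ y, (∫ z in ball y ε, pX z) * pY y) - ∫ y, pX y * pY y|
      ≤ (1/2) * K^2 * ε ^ (2 * α) := by
  classical
  set B : Set (EuclideanSpace ℝ (Fin d)) := ball 0 ε with hBdef
  have hBfin : volume B ≠ ⊤ := measure_ball_lt_top.ne
  have hBpos : 0 < volume B := measure_ball_pos volume 0 hε0
  set c : ℝ := (volume B).toReal with hcdef
  have hc0 : 0 < c := ENNReal.toReal_pos hBpos.ne' hBfin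
  -- translated Memℒp
  have hXt : ∀ v : EuclideanSpace ℝ (Fin d), MemLp (fun y => pX (y + v)) 2 volume := fun v =>
    hXL2.comp_measurePreserving (measurePreserving_add_right volume v)
  have hYt : ∀ v : EuclideanSpace ℝ (Fin d), MemLp (fun y => pY (y + v)) 2 volume := fun v =>
    hYL2.comp_measurePreserving (measurePreserving_add_right volume v)
  -- step A : translate the inner set integral
  have stepA : ∀ y : EuclideanSpace ℝ (Fin d),
      ∫ z in ball y ε, pX z = ∫ v in B, pX (y + v) := by
    intro y
    have hemb : MeasurableEmbedding (fun v : EuclideanSpace ℝ (Fin d) => y + v) :=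
      (MeasurableEquiv.addLeft y).measurableEmbedding
    have hmp : MeasurePreserving (fun v : EuclideanSpace ℝ (Fin d) => y + v) volume volume :=
      measurePreserving_add_left volume y
    have hpre : (fun v : EuclideanSpace ℝ (Fin d) => y + v) ⁻¹' (ball y ε) = B := by
      ext v
      simp [hBdef, mem_ball, dist_eq_norm, add_sub_cancel_left, mem_ball_zero_iff]
    have h := hmp.setIntegral_preimage_emb hemb pX (ball y ε)
    rw [hpre] at h
    exact h.symm
  -- integrability of the translate of pX
  have hXtint : ∀ y : EuclideanSpace ℝ (Fin d),
      Integrable (fun v : EuclideanSpace ℝ (Fin d) => pX (y + v)) volume := fun y =>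
    ((measurePreserving_add_left volume y).integrable_comp
      hXm.aestronglyMeasurable).mpr hXint
  -- translate of full integral
  have hXttot : ∀ y : EuclideanSpace ℝ (Fin d),
      ∫ v, pX (y + v) = 1 := by
    intro y
    rw [← hX1]
    exact integral_add_left_eq_self pX y
  -- product integrability for Fubini
  have hprodm : AEStronglyMeasurable
      (fun p : EuclideanSpace ℝ (Fin d) × EuclideanSpace ℝ (Fin d) => pX (p.1 + p.2) * pY p.1)
      (volume.prod (volume.restrict B)) :=
    ((hXm.comp (measurable_fst.add measurable_snd)).mul (hYm.comp measurable_fst)).aestronglyMeasurable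
  have hint : Integrable
      (fun p : EuclideanSpace ℝ (Fin d) × EuclideanSpace ℝ (Fin d) => pX (p.1 + p.2) * pY p.1)
      (volume.prod (volume.restrict B)) := by
    rw [integrable_prod_iff hprodm]
    constructor
    · refine Eventually.of_forall fun y => ?_
      exact ((hXtint y).restrict.mul_const (pY y))
    · refine Integrable.mono' hYint hprodm.norm.integral_prod_right'
        (Eventually.of_forall fun y => ?_)
      have hnn : ∀ v, 0 ≤ pX (y + v) * pY y := fun v => mul_nonneg (hXnn _) (hYnn _)
      have e1 : ∫ v in B, ‖pX (y + v) * pY y‖ = (∫ v in B, pX (y + v)) * pY y := by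
        rw [← integral_mul_const]
        exact integral_congr_ae (Eventually.of_forall fun v => Real.norm_of_nonneg (hnn v))
      have hle : (∫ v in B, pX (y + v)) ≤ 1 := by
        rw [← hXttot y]
        exact setIntegral_le_integral (hXtint y) (Eventually.of_forall fun v => hXnn _)
      have hge : 0 ≤ ∫ v in B, pX (y + v) :=
        integral_nonneg fun v => hXnn _
      rw [Real.norm_of_nonneg (by rw [e1]; exact mul_nonneg hge (hYnn y))]
      rw [e1]
      calc (∫ v in B, pX (y + v)) * pY y ≤ 1 * pY y :=
            mul_le_mul_of_nonneg_right hle (hYnn y)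
        _ = pY y := one_mul _
  set I : ℝ := ∫ y, pX y * pY y with hIdef
  set T : EuclideanSpace ℝ (Fin d) → ℝ := fun v => ∫ y, pX (y + v) * pY y with hTdef
  -- Fubini
  have fub : (∫ y, (∫ v in B, pX (y + v)) * pY y) = ∫ v in B, T v := by
    have h1 : (∫ y, (∫ v in B, pX (y + v)) * pY y)
        = ∫ y, ∫ v in B, pX (y + v) * pY y := by
      congr 1
      funext y
      rw [← integral_mul_const]
    rw [h1]
    exact integral_integral_swap (f := fun y v => pX (y + v) * pY y) hint
  have hTI : Integrable T (volume.restrict B) := hint.integral_prod_right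
  -- symmetrization : neg is measure preserving on restrict B
  have hnegpre : (Neg.neg : EuclideanSpace ℝ (Fin d) → EuclideanSpace ℝ (Fin d)) ⁻¹' B = B := by
    ext v
    simp [hBdef, mem_ball_zero_iff]
  have hnegemb : MeasurableEmbedding
      (Neg.neg : EuclideanSpace ℝ (Fin d) → EuclideanSpace ℝ (Fin d)) :=
    (MeasurableEquiv.neg (EuclideanSpace ℝ (Fin d))).measurableEmbedding
  have hnegmp : MeasurePreserving (Neg.neg : EuclideanSpace ℝ (Fin d) → EuclideanSpace ℝ (Fin d))
      (volume : Measure (EuclideanSpace ℝ (Fin d))) volume := Measure.measurePreserving_neg _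
  have hnegB : MeasurePreserving (Neg.neg : EuclideanSpace ℝ (Fin d) → EuclideanSpace ℝ (Fin d))
      (volume.restrict B) (volume.restrict B) := by
    have h := hnegmp.restrict_preimage_emb hnegemb B
    rwa [hnegpre] at h
  have sym : ∫ v in B, (T v - I) = ∫ v in B, (T (-v) - I) :=
    (hnegB.integral_comp hnegemb (fun v => T v - I)).symm
  -- integrability pieces
  have i3 : Integrable (fun y => pX y * pY y) volume := aux_integrable_L2_mul hXL2 hYL2
  -- expansion identity
  set S : EuclideanSpace ℝ (Fin d) → ℝ :=
    fun v => ∫ y, (pX (y + v) - pX y) * (pY y - pY (y + v)) with hSdef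
  have hexp : ∀ v, T v + T (-v) - 2*I = S v := by
    intro v
    have i1 : Integrable (fun y => pX (y + v) * pY y) volume :=
      aux_integrable_L2_mul (hXt v) hYL2
    have i2 : Integrable (fun y => pX (y + v) * pY (y + v)) volume :=
      aux_integrable_L2_mul (hXt v) (hYt v)
    have i4 : Integrable (fun y => pX y * pY (y + v)) volume :=
      aux_integrable_L2_mul hXL2 (hYt v)
    have e2 : (∫ y, pX (y + v) * pY (y + v)) = I := by
      rw [hIdef]
      exact integral_add_right_eq_self (fun y => pX y * pY y) v
    have e4 : (∫ y, pX y * pY (y + v)) = T (-v) := by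
      have h1 : (∫ y, pX y * pY (y + v)) = ∫ y, pX (y + v + -v) * pY (y + v) := by
        congr 1; funext y; rw [add_neg_cancel_right]
      rw [h1]
      exact integral_add_right_eq_self (fun y => pX (y + -v) * pY y) v
    have expand : S v = (∫ y, pX (y + v) * pY y) - (∫ y, pX (y + v) * pY (y + v))
        - (∫ y, pX y * pY y) + (∫ y, pX y * pY (y + v)) := by
      rw [hSdef]
      have h1 : ∀ y : EuclideanSpace ℝ (Fin d),
          (pX (y + v) - pX y) * (pY y - pY (y + v))
          = (pX (y + v) * pY y - pX (y + v) * pY (y + v)) - (pX y * pY y - pX y * pY (y + v)) := by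
        intro y; ring
      simp only [h1]
      have j1 : Integrable (fun y => pX (y + v) * pY y - pX (y + v) * pY (y + v)) volume :=
        i1.sub i2
      have j2 : Integrable (fun y => pX y * pY y - pX y * pY (y + v)) volume :=
        i3.sub i4
      rw [integral_sub j1 j2, integral_sub i1 i2, integral_sub i3 i4]
      ring
    rw [expand, e2, e4]
    have hTv : T v = ∫ y, pX (y + v) * pY y := rfl
    rw [← hTv, ← hIdef]
    ring
  -- combine halves
  have hconst : Integrable (fun _ : EuclideanSpace ℝ (Fin d) => I) (volume.restrict B) :=
    integrableOn_const hBfin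
  have hTm : Integrable (fun v => T v - I) (volume.restrict B) := hTI.sub hconst
  have hTnegm : Integrable (fun v => T (-v) - I) (volume.restrict B) :=
    (hnegB.integrable_comp hTm.aestronglyMeasurable).mpr hTm
  have hSint : Integrable S (volume.restrict B) := by
    have : (fun v => (T v - I) + (T (-v) - I)) = S := by
      funext v
      rw [← hexp v]; ring
    rw [← this]
    exact hTm.add hTnegm
  have half : (∫ v in B, (T v - I)) = (1/2) * ∫ v in B, S v := by
    have hadd : (∫ v in B, (T v - I)) + (∫ v in B, (T (-v) - I))
        = ∫ v in B, ((T v - I) + (T (-v) - I)) := (integral_add hTm hTnegm).symm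
    have hS : (∫ v in B, ((T v - I) + (T (-v) - I))) = ∫ v in B, S v := by
      congr 1; funext v; rw [← hexp v]; ring
    have := sym
    linarith [hadd, hS, sym]
  -- pointwise bound on S
  have hSbound : ∀ v ∈ B, |S v| ≤ K^2 * ε ^ (2*α) := by
    intro v hv
    have hvε : ‖v‖ ≤ ε := by
      rw [hBdef, mem_ball_zero_iff] at hv
      exact hv.le
    have hv1 : ‖v‖ ≤ 1 := hvε.trans hε1
    have hfX : MemLp (fun y => pX (y + v) - pX y) 2 volume := (hXt v).sub hXL2
    have hfY : MemLp (fun y => pY y - pY (y + v)) 2 volume := hYL2.sub (hYt v)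
    have cs := aux_cs hfX hfY
    have bX : (eLpNorm (fun y => pX (y + v) - pX y) 2 volume).toReal ≤ K * ‖v‖ ^ α :=
      ENNReal.toReal_le_of_le_ofReal (by positivity) (hXHol v hv1)
    have bY : (eLpNorm (fun y => pY y - pY (y + v)) 2 volume).toReal ≤ K * ‖v‖ ^ α := by
      have heq : eLpNorm (fun y => pY y - pY (y + v)) 2 volume
          = eLpNorm (fun y => pY (y + v) - pY y) 2 volume := by
        rw [← eLpNorm_neg (f := fun y => pY (y + v) - pY y)]
        congr 1
        funext y
        simp [neg_sub]
      rw [heq]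
      exact ENNReal.toReal_le_of_le_ofReal (by positivity) (hYHol v hv1)
    have hr : ‖v‖ ^ α ≤ ε ^ α := Real.rpow_le_rpow (norm_nonneg v) hvε hα0.le
    have hb1 : (eLpNorm (fun y => pX (y + v) - pX y) 2 volume).toReal ≤ K * ε ^ α :=
      bX.trans (mul_le_mul_of_nonneg_left hr hK.le)
    have hb2 : (eLpNorm (fun y => pY y - pY (y + v)) 2 volume).toReal ≤ K * ε ^ α :=
      bY.trans (mul_le_mul_of_nonneg_left hr hK.le)
    calc |S v| ≤ _ := cs
      _ ≤ (K * ε ^ α) * (K * ε ^ α) := by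
        apply mul_le_mul hb1 hb2 ENNReal.toReal_nonneg
        positivity
      _ = K^2 * ε ^ (2*α) := by
        rw [two_mul, Real.rpow_add hε0]
        ring
  -- bound the set integral of S
  have habs : |∫ v in B, S v| ≤ K^2 * ε ^ (2*α) * c := by
    have h := norm_setIntegral_le_of_norm_le_const_ae' (C := K^2 * ε ^ (2*α))
      ((Ne.lt_top hBfin))
      (Eventually.of_forall fun v hv => by
        rw [Real.norm_eq_abs]; exact hSbound v hv)
    simpa [Real.norm_eq_abs, hcdef, measureReal_def] using h
  -- assemble
  have hker : (∫ y, (∫ z in ball y ε, pX z) * pY y) = ∫ v in B, T v := by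
    rw [← fub]
    congr 1
    funext y
    rw [stepA y]
  have hconstint : (∫ v in B, (fun _ => I) v) = c * I := by
    rw [setIntegral_const]
    simp [hcdef, smul_eq_mul, measureReal_def]
  have key : c⁻¹ * (∫ v in B, T v) - I = c⁻¹ * ∫ v in B, (T v - I) := by
    rw [integral_sub hTI hconst]
    have : (∫ v in B, I) = c * I := hconstint
    rw [this]
    field_simp
  rw [hker, key, half]
  rw [abs_mul, abs_of_nonneg (inv_nonneg.mpr hc0.le), abs_mul]
  have h2 : |(1:ℝ)/2| = 1/2 := by norm_num
  rw [h2]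
  calc c⁻¹ * (1/2 * |∫ v in B, S v|) ≤ c⁻¹ * (1/2 * (K^2 * ε ^ (2*α) * c)) := by
        apply mul_le_mul_of_nonneg_left _ (inv_nonneg.mpr hc0.le)
        exact mul_le_mul_of_nonneg_left habs (by norm_num)
    _ = (1/2) * K^2 * ε ^ (2*α) := by
        field_simp
end
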